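/- Under Assumption 1, if α < 1/(βM), then for every θ ∈ Θ the proposal normalizing constant admits the upper bound Z_{α,β}(θ) ≤ exp(−βU(θ)) · Σ_{x∈Θ} exp(βU(x)). -/

import Mathlib

open scoped RealInnerProductSpace BigOperators
open Classical


lemma descent_lemma {d : ℕ} (U : EuclideanSpace ℝ (Fin d) → ℝ)
    (gradU : EuclideanSpace ℝ (Fin d) → EuclideanSpace ℝ (Fin d))
    (hgrad : ∀ x, HasGradientAt U (gradU x) x)
    (M : ℝ) (hM : 0 ≤ M)
    (hLip : ∀ x y, ‖gradU x - gradU y‖ ≤ M * ‖x - y‖)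
    (θ x : EuclideanSpace ℝ (Fin d)) :
    ⟪gradU θ, x - θ⟫ ≤ U x - U θ + M / 2 * ‖x - θ‖ ^ 2 := by
  set v := x - θ with hv
  set ψ : ℝ → ℝ := fun t => U (θ + t • v) - t * ⟪gradU θ, v⟫ + M * t ^ 2 / 2 * ‖v‖ ^ 2
    with hψdef
  have hline : ∀ t : ℝ, HasDerivAt (fun t : ℝ => θ + t • v) v t := by
    intro t
    simpa using ((hasDerivAt_id t).smul_const v).const_add θ
  have hψ : ∀ t : ℝ, HasDerivAt ψ
      (⟪gradU (θ + t • v), v⟫ - ⟪gradU θ, v⟫ + M * t * ‖v‖ ^ 2) t := by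
    intro t
    have h1 : HasDerivAt (fun t : ℝ => U (θ + t • v)) (⟪gradU (θ + t • v), v⟫) t := by
      have := (hgrad (θ + t • v)).hasFDerivAt.comp_hasDerivAt t (hline t)
      exact this
    have h2 : HasDerivAt (fun t : ℝ => t * ⟪gradU θ, v⟫) (⟪gradU θ, v⟫) t := by
      simpa using (hasDerivAt_id t).mul_const _
    have h3 : HasDerivAt (fun t : ℝ => M * t ^ 2 / 2 * ‖v‖ ^ 2) (M * t * ‖v‖ ^ 2) t := by
      have : HasDerivAt (fun t : ℝ => t ^ 2) (2 * t) t := by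
        simpa using hasDerivAt_pow 2 t
      have := ((this.const_mul M).div_const 2).mul_const (‖v‖ ^ 2)
      exact this.congr_deriv (by ring)
    exact (h1.sub h2).add h3
  have hmono : MonotoneOn ψ (Set.Icc 0 1) := by
    apply monotoneOn_of_deriv_nonneg (convex_Icc 0 1)
    · exact Continuous.continuousOn (by
        have : Differentiable ℝ ψ := fun t => (hψ t).differentiableAt
        exact this.continuous)
    · intro t ht
      exact (hψ t).differentiableAt.differentiableWithinAt
    · intro t ht
      rw [(hψ t).deriv]
      have ht0 : 0 ≤ t := (Set.mem_Icc.mp (interior_subset ht)).1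
      have hcs : |⟪gradU (θ + t • v) - gradU θ, v⟫| ≤ ‖gradU (θ + t • v) - gradU θ‖ * ‖v‖ :=
        abs_real_inner_le_norm _ _
      have hlip : ‖gradU (θ + t • v) - gradU θ‖ ≤ M * (t * ‖v‖) := by
        have := hLip (θ + t • v) θ
        simpa [norm_smul, abs_of_nonneg ht0] using this
      have : -(M * t * ‖v‖ ^ 2) ≤ ⟪gradU (θ + t • v) - gradU θ, v⟫ := by
        have h := (abs_le.mp hcs).1
        have : -(‖gradU (θ + t • v) - gradU θ‖ * ‖v‖) ≤ ⟪gradU (θ + t • v) - gradU θ, v⟫ := h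
        nlinarith [norm_nonneg v, mul_le_mul_of_nonneg_right hlip (norm_nonneg v)]
      have hsub : ⟪gradU (θ + t • v) - gradU θ, v⟫
          = ⟪gradU (θ + t • v), v⟫ - ⟪gradU θ, v⟫ := inner_sub_left _ _ _
      linarith [hsub ▸ this]
  have h01 : ψ 0 ≤ ψ 1 := hmono (by simp) (by norm_num) (by norm_num)
  have h0 : ψ 0 = U θ := by simp [hψdef]
  have h1 : ψ 1 = U x - ⟪gradU θ, v⟫ + M / 2 * ‖v‖ ^ 2 := by
    simp only [hψdef, one_smul, one_pow, one_mul]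
    have : θ + v = x := by simp [hv]
    rw [this]; ring
  rw [h0, h1] at h01
  linarith


/-- under Assumption 1, if α < 1/(βM), then for every θ ∈ Θ the proposal
normalizing constant satisfies Z_{α,β}(θ) ≤ exp(−βU(θ)) · Σ_{x∈Θ} exp(βU(x)). -/
theorem proposal_normalizer_upper_bound
    {d : ℕ} (hd : 1 ≤ d)
    (Θ : Finset (EuclideanSpace ℝ (Fin d))) (hΘ : Θ.Nonempty)
    (U : EuclideanSpace ℝ (Fin d) → ℝ) (hU : ContDiff ℝ 2 U)
    (gradU : EuclideanSpace ℝ (Fin d) → EuclideanSpace ℝ (Fin d))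
    (hgrad : ∀ x, HasGradientAt U (gradU x) x)
    -- Assumption 1: ∇U is M-Lipschitz
    (M : ℝ) (hM : 0 < M)
    (hLip : ∀ x y, ‖gradU x - gradU y‖ ≤ M * ‖x - y‖)
    -- step size and balancing parameter
    (α β : ℝ) (hα : 0 < α) (hβ0 : 0 < β) (hβ1 : β ≤ 1)
    (hαβM : α < 1 / (β * M))
    -- the proposal normalizing constant Z_{α,β}
    (Zc : EuclideanSpace ℝ (Fin d) → ℝ)
    (hZc : ∀ θ, Zc θ =
      ∑ x ∈ Θ, Real.exp (β * ⟪gradU θ, x - θ⟫ - ‖x - θ‖ ^ 2 / (2 * α)))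
 :
    ∀ θ ∈ Θ, Zc θ ≤ Real.exp (-(β * U θ)) * ∑ x ∈ Θ, Real.exp (β * U x) := by
  intro θ hθ
  rw [hZc, Finset.mul_sum]
  apply Finset.sum_le_sum
  intro x hx
  rw [← Real.exp_add]
  apply Real.exp_le_exp.mpr
  have hdes := descent_lemma U gradU hgrad M hM.le hLip θ x
  have hβM : 0 < β * M := mul_pos hβ0 hM
  have hαβ : α * (β * M) < 1 := by
    rw [lt_div_iff₀ hβM] at hαβM; linarith
  have hcoef : β * M / 2 ≤ 1 / (2 * α) := by
    rw [div_le_div_iff₀ (by norm_num) (by linarith)]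
    nlinarith
  have hnormsq : (0:ℝ) ≤ ‖x - θ‖ ^ 2 := by positivity
  have h1 : β * ⟪gradU θ, x - θ⟫ ≤ β * (U x - U θ) + β * M / 2 * ‖x - θ‖ ^ 2 := by
    nlinarith [mul_le_mul_of_nonneg_left hdes hβ0.le]
  have h2 : β * M / 2 * ‖x - θ‖ ^ 2 ≤ ‖x - θ‖ ^ 2 / (2 * α) := by
    have := mul_le_mul_of_nonneg_right hcoef hnormsq
    calc β * M / 2 * ‖x - θ‖ ^ 2 ≤ 1 / (2 * α) * ‖x - θ‖ ^ 2 := this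
      _ = ‖x - θ‖ ^ 2 / (2 * α) := by ring
  nlinarith
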